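/- Strict 𝓗∞ performance of the Riccati state-feedback gain (time-domain form of Theorem 2): let A, B, B_w, Q, R, γ be as in the game Riccati setup with R positive definite and γ > 0, let P* be a symmetric n×n matrix with 𝓡(P*) = 0, and set K* = −R⁻¹BᵀP*, Q* = Q + (K*)ᵀRK*. Let w : [0,∞) → ℝ^p be continuous with ∫₀^∞ ‖w(t)‖² dt > 0, and let x : [0,∞) → ℝⁿ be differentiable with x'(t) = (A+BK*) x(t) + B_w w(t) for all t ≥ 0, x(0) = 0, x(t) → 0 as t → ∞, and t ↦ ‖x(t)‖², t ↦ ‖w(t)‖² integrable on (0,∞). Then ∫₀^∞ ( x(t)ᵀQ*x(t) − γ²‖w(t)‖² ) dt < 0. -/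

import Mathlib

open Matrix MeasureTheory Filter

section Helpers

lemma dp_shift {n m : ℕ} (M : Matrix (Fin n) (Fin m) ℝ) (u : Fin m → ℝ) (v : Fin n → ℝ) :
    (M *ᵥ u) ⬝ᵥ v = u ⬝ᵥ (Mᵀ *ᵥ v) := by
  rw [Matrix.dotProduct_mulVec, Matrix.vecMul_transpose]

lemma quad_abs_le {n : ℕ} (M : Matrix (Fin n) (Fin n) ℝ) (v : Fin n → ℝ) :
    |v ⬝ᵥ M *ᵥ v| ≤ (∑ i, ∑ j, |M i j|) * (v ⬝ᵥ v) := by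
  have hvv : ∀ i j, |v i * v j| ≤ v ⬝ᵥ v := by
    intro i j
    have h1 : (v i)^2 ≤ v ⬝ᵥ v := by
      have := Finset.single_le_sum (f := fun k => v k * v k)
        (fun k _ => mul_self_nonneg _) (Finset.mem_univ i)
      simpa [dotProduct, pow_two] using this
    have h2 : (v j)^2 ≤ v ⬝ᵥ v := by
      have := Finset.single_le_sum (f := fun k => v k * v k)
        (fun k _ => mul_self_nonneg _) (Finset.mem_univ j)
      simpa [dotProduct, pow_two] using this
    rw [abs_mul]
    nlinarith [abs_nonneg (v i), abs_nonneg (v j), sq_abs (v i), sq_abs (v j),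
      sq_nonneg (|v i| - |v j|)]
  calc |v ⬝ᵥ M *ᵥ v| = |∑ i, ∑ j, M i j * (v i * v j)| := by
        simp only [dotProduct, Matrix.mulVec, Finset.mul_sum]
        congr 1
        exact Finset.sum_congr rfl fun i _ => Finset.sum_congr rfl fun j _ => by ring
    _ ≤ ∑ i, ∑ j, |M i j * (v i * v j)| := by
        refine (Finset.abs_sum_le_sum_abs _ _).trans ?_
        exact Finset.sum_le_sum fun i _ => Finset.abs_sum_le_sum_abs _ _
    _ ≤ ∑ i, ∑ j, |M i j| * (v ⬝ᵥ v) := by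
        refine Finset.sum_le_sum fun i _ => Finset.sum_le_sum fun j _ => ?_
        rw [abs_mul]
        exact mul_le_mul_of_nonneg_left (hvv i j) (abs_nonneg _)
    _ = (∑ i, ∑ j, |M i j|) * (v ⬝ᵥ v) := by
        rw [Finset.sum_mul]
        exact Finset.sum_congr rfl fun i _ => (Finset.sum_mul _ _ _).symm

lemma mulVec_norm_le {n q : ℕ} (N : Matrix (Fin q) (Fin n) ℝ) (v : Fin n → ℝ) :
    ‖N *ᵥ v‖ ≤ (∑ i, ∑ j, |N i j|) * ‖v‖ := by
  have hC : (0:ℝ) ≤ ∑ i, ∑ j, |N i j| :=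
    Finset.sum_nonneg fun i _ => Finset.sum_nonneg fun j _ => abs_nonneg _
  rw [pi_norm_le_iff_of_nonneg (by positivity)]
  intro i
  calc ‖(N *ᵥ v) i‖ = |∑ j, N i j * v j| := by simp [Matrix.mulVec, dotProduct]
    _ ≤ ∑ j, |N i j * v j| := Finset.abs_sum_le_sum_abs _ _
    _ ≤ ∑ j, |N i j| * ‖v‖ := by
        refine Finset.sum_le_sum fun j _ => ?_
        rw [abs_mul]
        exact mul_le_mul_of_nonneg_left ((norm_le_pi_norm v j).trans_eq' (by simp)) (abs_nonneg _)
    _ = (∑ j, |N i j|) * ‖v‖ := by rw [Finset.sum_mul]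
    _ ≤ (∑ i, ∑ j, |N i j|) * ‖v‖ := by
        refine mul_le_mul_of_nonneg_right ?_ (norm_nonneg _)
        exact Finset.single_le_sum (f := fun i => ∑ j, |N i j|)
          (fun k _ => Finset.sum_nonneg fun j _ => abs_nonneg _) (Finset.mem_univ i)

lemma hasDerivAt_quadForm {n : ℕ} (P : Matrix (Fin n) (Fin n) ℝ) {x : ℝ → Fin n → ℝ}
    {d : Fin n → ℝ} {t : ℝ} (hx : HasDerivAt x d t) :
    HasDerivAt (fun s => x s ⬝ᵥ P *ᵥ x s) (d ⬝ᵥ P *ᵥ x t + x t ⬝ᵥ P *ᵥ d) t := by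
  have hxi : ∀ i, HasDerivAt (fun s => x s i) (d i) t := fun i => hasDerivAt_pi.1 hx i
  have : HasDerivAt (fun s => ∑ i, x s i * ∑ j, P i j * x s j)
      (∑ i, (d i * ∑ j, P i j * x t j + x t i * ∑ j, P i j * d j)) t := by
    refine HasDerivAt.fun_sum fun i _ => ?_
    exact (hxi i).mul (HasDerivAt.fun_sum fun j _ => (hxi j).const_mul (P i j))
  convert this using 1 <;> simp only [dotProduct, Matrix.mulVec, Finset.sum_add_distrib]

lemma cont_mulVec {n q : ℕ} (N : Matrix (Fin q) (Fin n) ℝ) :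
    Continuous fun v : Fin n → ℝ => N *ᵥ v := by
  refine continuous_pi fun i => ?_
  simpa [Matrix.mulVec, dotProduct] using
    (continuous_finset_sum Finset.univ fun j _ => continuous_const.mul (continuous_apply j))

lemma cont_dotSelf {q : ℕ} : Continuous fun v : Fin q → ℝ => v ⬝ᵥ v := by
  simpa [dotProduct, Pi.mul_apply] using
    (continuous_finset_sum Finset.univ fun j (_ : j ∈ Finset.univ) =>
      ((continuous_apply j).fun_mul (continuous_apply j)))

lemma cont_quadForm {n : ℕ} (P : Matrix (Fin n) (Fin n) ℝ) :
    Continuous fun v : Fin n → ℝ => v ⬝ᵥ P *ᵥ v := by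
  refine continuous_finset_sum Finset.univ fun i _ => ?_
  exact (continuous_apply i).mul (((continuous_apply i).comp (cont_mulVec P)))

lemma dot_sub_le {q : ℕ} (u v : Fin q → ℝ) :
    (u - v) ⬝ᵥ (u - v) ≤ 2 * (u ⬝ᵥ u) + 2 * (v ⬝ᵥ v) := by
  simp only [dotProduct, Finset.mul_sum, ← Finset.sum_add_distrib]
  refine Finset.sum_le_sum fun i _ => ?_
  simp only [Pi.sub_apply]
  nlinarith [sq_nonneg (u i + v i)]

lemma pointwise_id {n p : ℕ} {γ : ℝ} (hγ : γ ≠ 0)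
    (P Qs M : Matrix (Fin n) (Fin n) ℝ) (Bw : Matrix (Fin n) (Fin p) ℝ)
    (hP : Pᵀ = P)
    (hLyap : Mᵀ * P + P * M + Qs + (γ ^ 2)⁻¹ • (P * Bw * Bwᵀ * P) = 0)
    (a : Fin n → ℝ) (b : Fin p → ℝ) :
    a ⬝ᵥ Qs *ᵥ a - γ ^ 2 * (b ⬝ᵥ b)
      + ((M *ᵥ a + Bw *ᵥ b) ⬝ᵥ P *ᵥ a + a ⬝ᵥ P *ᵥ (M *ᵥ a + Bw *ᵥ b))
    = -(γ ^ 2) * ((b - (γ ^ 2)⁻¹ • ((Bwᵀ * P) *ᵥ a)) ⬝ᵥ (b - (γ ^ 2)⁻¹ • ((Bwᵀ * P) *ᵥ a))) := by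
  set c : Fin p → ℝ := (Bwᵀ * P) *ᵥ a with hc
  have h0 : a ⬝ᵥ ((Mᵀ * P + P * M + Qs + (γ ^ 2)⁻¹ • (P * Bw * Bwᵀ * P)) *ᵥ a) = 0 := by
    rw [hLyap]; simp
  have hMP : (M *ᵥ a) ⬝ᵥ (P *ᵥ a) = a ⬝ᵥ ((Mᵀ * P) *ᵥ a) := by
    rw [dp_shift, Matrix.mulVec_mulVec]
  have hPM : a ⬝ᵥ (P *ᵥ (M *ᵥ a)) = a ⬝ᵥ ((P * M) *ᵥ a) := by
    rw [Matrix.mulVec_mulVec]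
  have hBwP : (Bw *ᵥ b) ⬝ᵥ (P *ᵥ a) = b ⬝ᵥ c := by
    rw [dp_shift, Matrix.mulVec_mulVec]
  have hPBw : a ⬝ᵥ (P *ᵥ (Bw *ᵥ b)) = b ⬝ᵥ c := by
    rw [Matrix.mulVec_mulVec, dotProduct_comm, dp_shift, Matrix.transpose_mul, hP]
  have hcc : c ⬝ᵥ c = a ⬝ᵥ ((P * Bw * Bwᵀ * P) *ᵥ a) := by
    rw [hc, dp_shift, Matrix.mulVec_mulVec, Matrix.transpose_mul, hP, Matrix.transpose_transpose]
    simp [Matrix.mulVec_mulVec, Matrix.mul_assoc]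
  have h1 : a ⬝ᵥ ((Mᵀ * P) *ᵥ a) + a ⬝ᵥ ((P * M) *ᵥ a) + a ⬝ᵥ (Qs *ᵥ a)
      + (γ ^ 2)⁻¹ * (a ⬝ᵥ ((P * Bw * Bwᵀ * P) *ᵥ a)) = 0 := by
    rw [← h0]
    simp [Matrix.add_mulVec, Matrix.smul_mulVec, dotProduct_add,
      dotProduct_smul, smul_eq_mul]
    try ring
  have hrhs : (b - (γ ^ 2)⁻¹ • c) ⬝ᵥ (b - (γ ^ 2)⁻¹ • c)
      = b ⬝ᵥ b - 2 * (γ ^ 2)⁻¹ * (b ⬝ᵥ c) + (γ ^ 2)⁻¹ * (γ ^ 2)⁻¹ * (c ⬝ᵥ c) := by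
    simp [sub_dotProduct, dotProduct_sub, smul_dotProduct,
      dotProduct_smul, smul_eq_mul, dotProduct_comm c b]
    ring
  have hγ2 : (γ ^ 2) ≠ 0 := pow_ne_zero _ hγ
  rw [add_dotProduct, Matrix.mulVec_add, dotProduct_add, hMP, hPM, hBwP, hPBw,
    hrhs, hcc]
  have hinv : γ ^ 2 * (γ ^ 2)⁻¹ = 1 := mul_inv_cancel₀ hγ2
  linear_combination h1 - (2 * (b ⬝ᵥ c) - (γ ^ 2)⁻¹ * (a ⬝ᵥ ((P * Bw * Bwᵀ * P) *ᵥ a))) * hinv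

lemma lyap_of_ARE {n m p : ℕ}
    (A : Matrix (Fin n) (Fin n) ℝ) (B : Matrix (Fin n) (Fin m) ℝ)
    (Bw : Matrix (Fin n) (Fin p) ℝ)
    (Q : Matrix (Fin n) (Fin n) ℝ)
    (R : Matrix (Fin m) (Fin m) ℝ) (hdet : IsUnit R.det) (hRT : Rᵀ = R)
    (γ : ℝ)
    (Ps : Matrix (Fin n) (Fin n) ℝ) (hPs : Psᵀ = Ps)
    (hARE : Aᵀ * Ps + Ps * A + Q - Ps * B * R⁻¹ * Bᵀ * Ps
      + (γ ^ 2)⁻¹ • (Ps * Bw * Bwᵀ * Ps) = 0) :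
    (A + B * (-(R⁻¹ * Bᵀ * Ps)))ᵀ * Ps + Ps * (A + B * (-(R⁻¹ * Bᵀ * Ps)))
      + (Q + (-(R⁻¹ * Bᵀ * Ps))ᵀ * R * (-(R⁻¹ * Bᵀ * Ps)))
      + (γ ^ 2)⁻¹ • (Ps * Bw * Bwᵀ * Ps) = 0 := by
  have hKt : (-(R⁻¹ * Bᵀ * Ps))ᵀ = -(Ps * B * R⁻¹) := by
    simp [Matrix.transpose_mul, Matrix.transpose_nonsing_inv, hRT, hPs, Matrix.mul_assoc]
  have hRR : R * (R⁻¹ * (Bᵀ * Ps)) = Bᵀ * Ps := by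
    rw [← Matrix.mul_assoc, Matrix.mul_nonsing_inv _ hdet, Matrix.one_mul]
  have hKRK : (-(R⁻¹ * Bᵀ * Ps))ᵀ * R * (-(R⁻¹ * Bᵀ * Ps)) = Ps * B * (R⁻¹ * (Bᵀ * Ps)) := by
    rw [hKt]
    simp only [Matrix.neg_mul, Matrix.mul_neg, neg_neg, Matrix.mul_assoc, hRR]
  rw [hKRK, Matrix.transpose_add, Matrix.transpose_mul, hKt]
  rw [← hARE]
  simp only [Matrix.mul_add, Matrix.add_mul, Matrix.neg_mul, Matrix.mul_neg, Matrix.mul_assoc]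
  abel

end Helpers

/-- Strict 𝓗∞ performance of the Riccati state-feedback gain
(time-domain form of Theorem 2). -/
theorem hinf_strict_performance {n m p : ℕ}
    (A : Matrix (Fin n) (Fin n) ℝ) (B : Matrix (Fin n) (Fin m) ℝ)
    (Bw : Matrix (Fin n) (Fin p) ℝ)
    (Q : Matrix (Fin n) (Fin n) ℝ) (hQ : Q.IsSymm)
    (R : Matrix (Fin m) (Fin m) ℝ) (hR : R.PosDef) (hRsymm : R.IsSymm)
    (γ : ℝ) (hγ : 0 < γ)
    (Ps : Matrix (Fin n) (Fin n) ℝ) (hPs : Ps.IsSymm)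
    (hARE : Aᵀ * Ps + Ps * A + Q - Ps * B * R⁻¹ * Bᵀ * Ps
      + (γ ^ 2)⁻¹ • (Ps * Bw * Bwᵀ * Ps) = 0)
    (x : ℝ → Fin n → ℝ) (w : ℝ → Fin p → ℝ)
    (hw : Continuous w)
    (hwnz : 0 < ∫ t in Set.Ioi (0 : ℝ), w t ⬝ᵥ w t)
    (hderiv : ∀ t : ℝ, 0 ≤ t →
      HasDerivAt x ((A + B * (-(R⁻¹ * Bᵀ * Ps))) *ᵥ x t + Bw *ᵥ w t) t)
    (hx0 : x 0 = 0)
    (hlim : Tendsto x atTop (nhds 0))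
    (hint_x : IntegrableOn (fun t => x t ⬝ᵥ x t) (Set.Ioi (0 : ℝ)))
    (hint_w : IntegrableOn (fun t => w t ⬝ᵥ w t) (Set.Ioi (0 : ℝ))) :
    (let Ks := -(R⁻¹ * Bᵀ * Ps)
     let Qs := Q + Ksᵀ * R * Ks
     (∫ t in Set.Ioi (0 : ℝ), (x t ⬝ᵥ Qs *ᵥ x t - γ ^ 2 * (w t ⬝ᵥ w t))) < 0) := by
  have hγ2 : (γ:ℝ) ^ 2 ≠ 0 := pow_ne_zero _ hγ.ne'
  have hγ2pos : (0:ℝ) < γ ^ 2 := by positivity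
  set K : Matrix (Fin m) (Fin n) ℝ := -(R⁻¹ * Bᵀ * Ps) with hK
  set M : Matrix (Fin n) (Fin n) ℝ := A + B * K with hM
  set Qs : Matrix (Fin n) (Fin n) ℝ := Q + Kᵀ * R * K with hQs
  set L : Matrix (Fin p) (Fin n) ℝ := Bwᵀ * Ps with hL
  have hLyap : Mᵀ * Ps + Ps * M + Qs + (γ ^ 2)⁻¹ • (Ps * Bw * Bwᵀ * Ps) = 0 := by
    rw [hM, hQs, hK]
    exact lyap_of_ARE A B Bw Q R hR.det_pos.ne'.isUnit hRsymm γ Ps hPs hARE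
  -- the functions
  set e : ℝ → Fin p → ℝ := fun t => w t - (γ ^ 2)⁻¹ • (L *ᵥ x t) with he
  set φ : ℝ → ℝ := fun t => x t ⬝ᵥ Qs *ᵥ x t - γ ^ 2 * (w t ⬝ᵥ w t) with hφ
  set ψ : ℝ → ℝ := fun t => e t ⬝ᵥ e t with hψ
  set F : ℝ → ℝ := fun t => x t ⬝ᵥ Ps *ᵥ x t with hF
  set D : ℝ → ℝ := fun t =>
    (M *ᵥ x t + Bw *ᵥ w t) ⬝ᵥ Ps *ᵥ x t + x t ⬝ᵥ Ps *ᵥ (M *ᵥ x t + Bw *ᵥ w t) with hD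
  have hxc : ∀ t : ℝ, 0 ≤ t → ContinuousAt x t := fun t ht => (hderiv t ht).continuousAt
  have hDF : ∀ t : ℝ, 0 ≤ t → HasDerivAt F (D t) t := fun t ht =>
    hasDerivAt_quadForm Ps (hderiv t ht)
  have hDid : ∀ t : ℝ, D t = -(φ t) - γ ^ 2 * ψ t := by
    intro t
    have hpt := pointwise_id hγ.ne' Ps Qs M Bw hPs hLyap (x t) (w t)
    simp only [hD, hφ, hψ, he, hL]
    linarith [hpt]
  have hxmOn : ContinuousOn x (Set.Ioi (0:ℝ)) := fun t ht => (hxc t ht.le).continuousWithinAt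
  -- integrability of the quadratic form in x
  have hint_q : IntegrableOn (fun t => x t ⬝ᵥ Qs *ᵥ x t) (Set.Ioi (0:ℝ)) := by
    refine Integrable.mono' (hint_x.const_mul (∑ i, ∑ j, |Qs i j|)) ?_ ?_
    · exact ((cont_quadForm Qs).comp_continuousOn hxmOn).aestronglyMeasurable measurableSet_Ioi
    · refine (ae_restrict_iff' measurableSet_Ioi).2 (ae_of_all _ fun t ht => ?_)
      rw [Real.norm_eq_abs]
      exact quad_abs_le Qs (x t)
  have hφint : IntegrableOn φ (Set.Ioi (0:ℝ)) := by
    rw [hφ]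
    exact hint_q.sub (hint_w.const_mul (γ ^ 2))
  have hψnn : ∀ t, 0 ≤ ψ t := by
    intro t
    simp only [hψ, dotProduct]
    exact Finset.sum_nonneg fun i _ => mul_self_nonneg _
  have heOn : ContinuousOn e (Set.Ioi (0:ℝ)) := by
    rw [he]
    exact hw.continuousOn.sub
      (((cont_mulVec L).comp_continuousOn hxmOn).const_smul ((γ ^ 2)⁻¹))
  have hψint : IntegrableOn ψ (Set.Ioi (0:ℝ)) := by
    refine Integrable.mono'
      ((hint_w.const_mul 2).add
        (hint_x.const_mul (2 * ((γ ^ 2)⁻¹ * (γ ^ 2)⁻¹ * (∑ i, ∑ j, |(Lᵀ * L) i j|))))) ?_ ?_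
    · exact (cont_dotSelf.comp_continuousOn heOn).aestronglyMeasurable measurableSet_Ioi
    · refine (ae_restrict_iff' measurableSet_Ioi).2 (ae_of_all _ fun t ht => ?_)
      rw [Real.norm_eq_abs, abs_of_nonneg (hψnn t)]
      simp only [Pi.add_apply]
      have h1 : ψ t ≤ 2 * (w t ⬝ᵥ w t)
          + 2 * (((γ ^ 2)⁻¹ • (L *ᵥ x t)) ⬝ᵥ ((γ ^ 2)⁻¹ • (L *ᵥ x t))) := by
        simp only [hψ, he]
        exact dot_sub_le _ _
      have h2 : ((γ ^ 2)⁻¹ • (L *ᵥ x t)) ⬝ᵥ ((γ ^ 2)⁻¹ • (L *ᵥ x t))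
          = (γ ^ 2)⁻¹ * (γ ^ 2)⁻¹ * ((L *ᵥ x t) ⬝ᵥ (L *ᵥ x t)) := by
        simp [smul_dotProduct, dotProduct_smul, smul_eq_mul]
        ring
      have h3 : (L *ᵥ x t) ⬝ᵥ (L *ᵥ x t) = x t ⬝ᵥ ((Lᵀ * L) *ᵥ x t) := by
        rw [dp_shift, Matrix.mulVec_mulVec]
      have h4 : x t ⬝ᵥ ((Lᵀ * L) *ᵥ x t) ≤ (∑ i, ∑ j, |(Lᵀ * L) i j|) * (x t ⬝ᵥ x t) :=
        (le_abs_self _).trans (quad_abs_le (Lᵀ * L) (x t))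
      have h5 : (0:ℝ) ≤ (γ ^ 2)⁻¹ * (γ ^ 2)⁻¹ := by positivity
      nlinarith [h1, h2, h3, h4, h5]
  have hDfun : D = fun t => -(φ t) - γ ^ 2 * ψ t := funext hDid
  have hDint : IntegrableOn D (Set.Ioi (0:ℝ)) := by
    rw [hDfun]
    exact hφint.neg.sub (hψint.const_mul (γ ^ 2))
  -- FTC on [0, ∞)
  have hcont0 : ContinuousWithinAt F (Set.Ici (0:ℝ)) 0 :=
    ((hDF 0 le_rfl).continuousAt).continuousWithinAt
  have htend : Tendsto F atTop (nhds 0) := by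
    have h := ((cont_quadForm Ps).tendsto 0).comp hlim
    simpa [hF, zero_dotProduct, Function.comp_def] using h
  have hFTC : ∫ t in Set.Ioi (0:ℝ), D t = 0 - F 0 :=
    integral_Ioi_of_hasDerivAt_of_tendsto hcont0 (fun t ht => hDF t (le_of_lt ht)) hDint htend
  have hF00 : F 0 = 0 := by simp [hF, hx0]
  have hDzero : ∫ t in Set.Ioi (0:ℝ), D t = 0 := by rw [hFTC, hF00, sub_zero]
  have hsplit : ∫ t in Set.Ioi (0:ℝ), D t
      = -(∫ t in Set.Ioi (0:ℝ), φ t) - γ ^ 2 * ∫ t in Set.Ioi (0:ℝ), ψ t := by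
    have hφint' : IntegrableOn (fun t => -(φ t)) (Set.Ioi (0:ℝ)) := hφint.neg
    have hψint' : IntegrableOn (fun t => γ ^ 2 * ψ t) (Set.Ioi (0:ℝ)) := hψint.const_mul _
    rw [hDfun, integral_sub hφint' hψint', integral_neg, integral_const_mul]
  have hκ : ∫ t in Set.Ioi (0:ℝ), φ t = -(γ ^ 2) * ∫ t in Set.Ioi (0:ℝ), ψ t := by
    rw [hsplit] at hDzero
    linarith
  -- positivity of ∫ ψ
  have hψI_nonneg : 0 ≤ ∫ t in Set.Ioi (0:ℝ), ψ t :=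
    setIntegral_nonneg measurableSet_Ioi fun t _ => hψnn t
  have hψI_pos : 0 < ∫ t in Set.Ioi (0:ℝ), ψ t := by
    rcases hψI_nonneg.lt_or_eq with h | h
    · exact h
    exfalso
    have hae : ψ =ᵐ[volume.restrict (Set.Ioi (0:ℝ))] 0 :=
      (integral_eq_zero_iff_of_nonneg (fun t => hψnn t) hψint).1 h.symm
    have hnull : volume.restrict (Set.Ioi (0:ℝ)) {t | ψ t ≠ 0} = 0 := by
      have := hae
      rw [Filter.EventuallyEq, ae_iff] at this
      simpa using this
    -- ψ vanishes everywhere on (0, ∞)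
    have hzero : ∀ t ∈ Set.Ioi (0:ℝ), ψ t = 0 := by
      by_contra hcon
      push_neg at hcon
      obtain ⟨t0, ht0, hne⟩ := hcon
      have hpos : 0 < ψ t0 := (hψnn t0).lt_of_ne (Ne.symm hne)
      have hψcont : ContinuousAt ψ t0 := by
        have hxa := hxc t0 (le_of_lt ht0)
        have hea : ContinuousAt e t0 := by
          rw [he]
          exact (hw.continuousAt).sub
            ((((cont_mulVec L).continuousAt).comp hxa).const_smul ((γ ^ 2)⁻¹))
        have : ContinuousAt (fun t => e t ⬝ᵥ e t) t0 :=
          (cont_dotSelf.continuousAt).comp hea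
        simpa [hψ] using this
      obtain ⟨δ, hδpos, hδ⟩ := Metric.continuousAt_iff.1 hψcont (ψ t0 / 2) (by linarith)
      set δ' : ℝ := min δ t0 with hδ'
      have hδ'pos : 0 < δ' := lt_min hδpos ht0
      have hSsub : Set.Ioo (t0 - δ') (t0 + δ') ⊆ {t | ψ t ≠ 0} := by
        intro s hs
        have hd : dist s t0 < δ := by
          rw [Real.dist_eq, abs_sub_lt_iff]
          constructor
          · have := hs.2; have : s < t0 + δ' := hs.2
            have hh : δ' ≤ δ := min_le_left _ _
            linarith
          · have : t0 - δ' < s := hs.1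
            have hh : δ' ≤ δ := min_le_left _ _
            linarith
        have := hδ hd
        rw [Real.dist_eq, abs_sub_lt_iff] at this
        have : ψ t0 / 2 < ψ s := by linarith [this.2]
        exact ne_of_gt (by linarith)
      have hSIoi : Set.Ioo (t0 - δ') (t0 + δ') ⊆ Set.Ioi (0:ℝ) := by
        intro s hs
        have : δ' ≤ t0 := min_le_right _ _
        have := hs.1
        simp only [Set.mem_Ioi]
        linarith
      have hSnull : volume.restrict (Set.Ioi (0:ℝ)) (Set.Ioo (t0 - δ') (t0 + δ')) = 0 :=
        measure_mono_null hSsub hnull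
      rw [Measure.restrict_apply measurableSet_Ioo,
        Set.inter_eq_self_of_subset_left hSIoi, Real.volume_Ioo] at hSnull
      rw [ENNReal.ofReal_eq_zero] at hSnull
      linarith
    -- hence w t = (γ²)⁻¹ • (L *ᵥ x t) for t > 0
    have hew : ∀ t : ℝ, 0 < t → w t = (γ ^ 2)⁻¹ • (L *ᵥ x t) := by
      intro t ht
      have h0 : e t ⬝ᵥ e t = 0 := by simpa [hψ] using hzero t ht
      have he0 : e t = 0 := dotProduct_self_eq_zero.mp h0
      have he1 : w t - (γ ^ 2)⁻¹ • (L *ᵥ x t) = 0 := by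
        have : e t = w t - (γ ^ 2)⁻¹ • (L *ᵥ x t) := by rw [he]
        rw [← this]; exact he0
      rwa [sub_eq_zero] at he1
    have hw0 : w 0 = 0 := by
      have h1 : Tendsto w (nhdsWithin 0 (Set.Ioi (0:ℝ))) (nhds (w 0)) :=
        (hw.continuousAt).continuousWithinAt
      have h2 : Tendsto (fun t => (γ ^ 2)⁻¹ • (L *ᵥ x t)) (nhdsWithin 0 (Set.Ioi (0:ℝ)))
          (nhds ((γ ^ 2)⁻¹ • (L *ᵥ x 0))) := by
        have : ContinuousAt (fun t => (γ ^ 2)⁻¹ • (L *ᵥ x t)) 0 :=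
          (((cont_mulVec L).continuousAt).comp (hxc 0 le_rfl)).const_smul ((γ ^ 2)⁻¹)
        exact this.continuousWithinAt
      have h1' : Tendsto w (nhdsWithin 0 (Set.Ioi (0:ℝ)))
          (nhds ((γ ^ 2)⁻¹ • (L *ᵥ x 0))) := by
        refine h2.congr' ?_
        filter_upwards [eventually_mem_nhdsWithin] with t ht
        exact (hew t ht).symm
      have := tendsto_nhds_unique h1 h1'
      rw [this, hx0]
      simp
    set N : Matrix (Fin n) (Fin n) ℝ := M + (γ ^ 2)⁻¹ • (Bw * L) with hN
    have hxd : ∀ t : ℝ, 0 ≤ t → HasDerivAt x (N *ᵥ x t) t := by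
      intro t ht
      have h := hderiv t ht
      convert h using 1
      rcases eq_or_lt_of_le ht with h0 | hpos
      · rw [← h0, hx0, hw0]
        simp [hN, Matrix.add_mulVec]
      · rw [hew t hpos, hN, Matrix.add_mulVec, Matrix.smul_mulVec,
          ← Matrix.mulVec_mulVec]
        rw [Matrix.mulVec_smul]
    have hx_zero : ∀ t : ℝ, 0 ≤ t → x t = 0 := by
      intro T hT
      have hb := norm_le_gronwallBound_of_norm_deriv_right_le
        (f := x) (f' := fun t => N *ᵥ x t) (δ := 0) (K := ∑ i, ∑ j, |N i j|) (ε := 0)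
        (a := 0) (b := T)
        (fun s hs => (hxc s hs.1).continuousWithinAt)
        (fun s hs => (hxd s hs.1).hasDerivWithinAt)
        (by simp [hx0])
        (fun s hs => by simpa using mulVec_norm_le N (x s))
        T ⟨hT, le_rfl⟩
      rw [gronwallBound_ε0] at hb
      simp only [zero_mul] at hb
      exact norm_le_zero_iff.mp hb
    have hwzero : Set.EqOn (fun t => w t ⬝ᵥ w t) (fun _ => (0:ℝ)) (Set.Ioi (0:ℝ)) := by
      intro t ht
      have := hew t ht
      rw [hx_zero t (le_of_lt ht)] at this
      simp only [Matrix.mulVec_zero, smul_zero] at this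
      simp [this]
    have : ∫ t in Set.Ioi (0:ℝ), w t ⬝ᵥ w t = 0 := by
      rw [setIntegral_congr_fun measurableSet_Ioi hwzero]
      simp
    rw [this] at hwnz
    exact lt_irrefl 0 hwnz
  -- conclusion
  have hfinal : ∫ t in Set.Ioi (0:ℝ), φ t < 0 := by
    rw [hκ]
    exact mul_neg_of_neg_of_pos (neg_neg_iff_pos.mpr hγ2pos) hψI_pos
  simpa only [hφ] using hfinal
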